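/- Let ρ > σ(A)·‖d‖_2 where σ(A) is the largest singular value of A ∈ R^{M×N}, d ∈ R^M. Let (x_ρ, u_ρ) be a global minimizer of G_ρ(x,u) = (1/2)‖Ax-d‖² + I(u) + ι_{x≥0}(x) + ρ(‖x‖_1 - ⟨x,u⟩), where I(u) = 0 if ‖u‖_1 ≤ k and u ∈ [-1,1]^N, +∞ otherwise. Then ‖x_ρ‖_1 = ⟨x_ρ, u_ρ⟩. -/

import Mathlib

noncomputable def l2norm {m : Type*} [Fintype m] (v : m → ℝ) : ℝ :=
  Real.sqrt (∑ i, (v i) ^ 2)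

noncomputable def specNorm {m n : Type*} [Fintype m] [Fintype n] [DecidableEq n]
    (A : Matrix m n ℝ) : ℝ :=
  ‖LinearMap.toContinuousLinearMap (Matrix.toEuclideanLin A)‖

open Classical in
/-- The Lagrangian cost function `G_ρ` with the constrained form of `I`. -/
noncomputable def GrhoC {M N : ℕ} (A : Matrix (Fin M) (Fin N) ℝ) (d : Fin M → ℝ)
    (ρ : ℝ) (k : ℕ) (x u : Fin N → ℝ) : EReal :=
  (((1 : ℝ) / 2) * (∑ i, ((A.mulVec x - d) i) ^ 2)
      + ρ * ((∑ i, |x i|) - ∑ i, x i * u i) : ℝ)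
  + (if (∑ i, |u i|) ≤ (k : ℝ) ∧ ∀ i, -1 ≤ u i ∧ u i ≤ 1 then (0 : EReal) else ⊤)
  + (if ∀ i, 0 ≤ x i then (0 : EReal) else ⊤)

noncomputable def Freal {M N : ℕ} (A : Matrix (Fin M) (Fin N) ℝ) (d : Fin M → ℝ)
    (ρ : ℝ) (x u : Fin N → ℝ) : ℝ :=
  ((1 : ℝ) / 2) * (∑ i, ((A.mulVec x - d) i) ^ 2)
      + ρ * ((∑ i, |x i|) - ∑ i, x i * u i)

lemma GrhoC_eq {M N : ℕ} (A : Matrix (Fin M) (Fin N) ℝ) (d : Fin M → ℝ)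
    (ρ : ℝ) (k : ℕ) (x u : Fin N → ℝ)
    (h1 : (∑ i, |u i|) ≤ (k : ℝ) ∧ ∀ i, -1 ≤ u i ∧ u i ≤ 1) (h2 : ∀ i, 0 ≤ x i) :
    GrhoC A d ρ k x u = ((Freal A d ρ x u : ℝ) : EReal) := by
  rw [GrhoC, if_pos h1, if_pos h2, add_zero, add_zero, Freal]

lemma GrhoC_feas {M N : ℕ} (A : Matrix (Fin M) (Fin N) ℝ) (d : Fin M → ℝ)
    (ρ : ℝ) (k : ℕ) (x u : Fin N → ℝ) (r : ℝ)
    (h : GrhoC A d ρ k x u ≤ (r : EReal)) :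
    ((∑ i, |u i|) ≤ (k : ℝ) ∧ ∀ i, -1 ≤ u i ∧ u i ≤ 1) ∧ (∀ i, 0 ≤ x i) := by
  by_cases h1 : (∑ i, |u i|) ≤ (k : ℝ) ∧ ∀ i, -1 ≤ u i ∧ u i ≤ 1
  · by_cases h2 : ∀ i, 0 ≤ x i
    · exact ⟨h1, h2⟩
    · exfalso
      rw [GrhoC, if_pos h1, if_neg h2, add_zero, EReal.coe_add_top] at h
      exact (EReal.coe_lt_top r).not_ge h
  · exfalso
    rw [GrhoC, if_neg h1, EReal.coe_add_top] at h
    by_cases h2 : ∀ i, 0 ≤ x i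
    · rw [if_pos h2, add_zero] at h
      exact (EReal.coe_lt_top r).not_ge h
    · rw [if_neg h2, EReal.top_add_top] at h
      exact (EReal.coe_lt_top r).not_ge h

open Finset in
lemma exists_top_finset {α : Type*} [DecidableEq α] (x : α → ℝ) :
    ∀ (j : ℕ) (s : Finset α), j ≤ s.card → ∃ T ⊆ s, T.card = j ∧
      ∀ i ∈ T, ∀ l ∈ s, l ∉ T → x l ≤ x i := by
  intro j
  induction j with
  | zero => intro s _; exact ⟨∅, empty_subset s, rfl, by simp⟩
  | succ n ih =>
    intro s hs
    have hne : s.Nonempty := card_pos.mp (by omega)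
    obtain ⟨i0, hi0s, hi0⟩ := s.exists_max_image x hne
    obtain ⟨T', hT's, hT'c, hT'⟩ := ih (s.erase i0) (by rw [card_erase_of_mem hi0s]; omega)
    have hi0T' : i0 ∉ T' := fun h => (mem_erase.mp (hT's h)).1 rfl
    refine ⟨insert i0 T', insert_subset hi0s (hT's.trans (erase_subset _ _)), ?_, ?_⟩
    · rw [card_insert_of_notMem hi0T', hT'c]
    · intro i hi l hls hlT
      rcases mem_insert.mp hi with rfl | hiT'
      · exact hi0 l hls
      · exact hT' i hiT' l
          (mem_erase.mpr ⟨fun h => hlT (h ▸ mem_insert_self i0 T'), hls⟩)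
          (fun h => hlT (mem_insert_of_mem h))

lemma mulVec_l2_le {M N : ℕ} (A : Matrix (Fin M) (Fin N) ℝ) (z : Fin N → ℝ) :
    Real.sqrt (∑ i, (A.mulVec z i) ^ 2) ≤ specNorm A * Real.sqrt (∑ i, z i ^ 2) := by
  have h := (LinearMap.toContinuousLinearMap (Matrix.toEuclideanLin A)).le_opNorm
    ((WithLp.equiv 2 (Fin N → ℝ)).symm z)
  simp only [LinearMap.coe_toContinuousLinearMap', WithLp.equiv_symm_apply,
    Matrix.toEuclideanLin_apply_piLp_toLp]
    at h
  rw [EuclideanSpace.norm_eq, EuclideanSpace.norm_eq] at h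
  simpa [Real.norm_eq_abs, sq_abs, specNorm] using h

open Finset in
lemma sum_mul_le_sum_top {N k : ℕ} (x u : Fin N → ℝ) (T : Finset (Fin N)) (hk : 0 < k)
    (hx : ∀ i, 0 ≤ x i) (hu1 : ∑ i, |u i| ≤ (k : ℝ)) (hu2 : ∀ i, -1 ≤ u i ∧ u i ≤ 1)
    (hTc : T.card = min k N) (hTt : ∀ i ∈ T, ∀ l, l ∉ T → x l ≤ x i) :
    ∑ i, x i * u i ≤ ∑ i ∈ T, x i := by
  rcases le_or_gt N k with hNk | hkN
  · have hT : T = univ := eq_univ_of_card T (by simp [hTc, min_eq_right hNk])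
    subst hT
    refine sum_le_sum fun i _ => ?_
    calc x i * u i ≤ x i * 1 := mul_le_mul_of_nonneg_left (hu2 i).2 (hx i)
    _ = x i := mul_one _
  · have hTk : T.card = k := by rw [hTc, min_eq_left hkN.le]
    have hTne : T.Nonempty := card_pos.mp (by omega)
    obtain ⟨i₁, hi₁T, hm⟩ := T.exists_min_image x hTne
    set m := x i₁ with hmdef
    have hm0 : 0 ≤ m := hx i₁
    have hub : ∀ l, l ∉ T → x l ≤ m := fun l hl => hTt i₁ hi₁T l hl
    have h1 : ∑ i ∈ T, x i * u i ≤ ∑ i ∈ T, (x i - m * (1 - |u i|)) := by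
      refine sum_le_sum fun i hi => ?_
      have h2 := (hu2 i).2
      have h3 : |u i| ≤ 1 := abs_le.mpr ⟨(hu2 i).1, (hu2 i).2⟩
      have h4 := le_abs_self (u i)
      have h5 := hm i hi
      nlinarith [hx i, abs_nonneg (u i)]
    have h2 : ∑ i ∈ Tᶜ, x i * u i ≤ ∑ i ∈ Tᶜ, m * |u i| := by
      refine sum_le_sum fun i hi => ?_
      have h4 := le_abs_self (u i)
      have h5 := hub i (by simpa using hi)
      nlinarith [hx i, abs_nonneg (u i)]
    have hsplit : ∑ i ∈ T, |u i| + ∑ i ∈ Tᶜ, |u i| = ∑ i, |u i| :=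
      sum_add_sum_compl T _
    have habs : ∀ i : Fin N, 0 ≤ |u i| := fun i => abs_nonneg _
    have hSC : 0 ≤ ∑ i ∈ Tᶜ, |u i| := sum_nonneg fun i _ => habs i
    have e1 : ∑ i ∈ T, (x i - m * (1 - |u i|))
        = ∑ i ∈ T, x i - (m * k - m * ∑ i ∈ T, |u i|) := by
      rw [sum_sub_distrib]
      congr 1
      rw [← hTk]
      simp [mul_sub, sum_sub_distrib, mul_sum, sum_const, nsmul_eq_mul]
      ring
    have e2 : ∑ i ∈ Tᶜ, m * |u i| = m * ∑ i ∈ Tᶜ, |u i| := by rw [mul_sum]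
    have key : m * ∑ i ∈ Tᶜ, |u i| ≤ m * k - m * ∑ i ∈ T, |u i| := by
      nlinarith
    have hfull : ∑ i, x i * u i = ∑ i ∈ T, x i * u i + ∑ i ∈ Tᶜ, x i * u i :=
      (sum_add_sum_compl T _).symm
    linarith

set_option maxHeartbeats 2000000 in
theorem constrained_equality_at_min (M N : ℕ) (A : Matrix (Fin M) (Fin N) ℝ)
    (d : Fin M → ℝ) (ρ : ℝ) (k : ℕ) (hk : 0 < k)
    (hρ : specNorm A * l2norm d < ρ)
    (xρ uρ : Fin N → ℝ)
    (hmin : ∀ x u : Fin N → ℝ, GrhoC A d ρ k xρ uρ ≤ GrhoC A d ρ k x u) :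
    (∑ i, |xρ i|) = ∑ i, xρ i * uρ i := by
  classical
  have hσ : 0 ≤ specNorm A := norm_nonneg _
  have hd0 : 0 ≤ l2norm d := Real.sqrt_nonneg _
  have hρ0 : 0 < ρ := lt_of_le_of_lt (mul_nonneg hσ hd0) hρ
  have hfeas00 : ((∑ i, |(0 : Fin N → ℝ) i|) ≤ (k : ℝ) ∧
      ∀ i, -1 ≤ (0 : Fin N → ℝ) i ∧ (0 : Fin N → ℝ) i ≤ 1) := by
    constructor
    · simp
    · intro i; norm_num
  have h00 : GrhoC A d ρ k 0 0 = ((Freal A d ρ 0 0 : ℝ) : EReal) :=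
    GrhoC_eq _ _ _ _ _ _ hfeas00 (fun i => le_refl 0)
  obtain ⟨⟨hu1, hu2⟩, hx⟩ := GrhoC_feas A d ρ k xρ uρ _ (by rw [← h00]; exact hmin 0 0)
  have hR : ∀ x u : Fin N → ℝ, ((∑ i, |u i|) ≤ (k : ℝ)) → (∀ i, -1 ≤ u i ∧ u i ≤ 1) →
      (∀ i, 0 ≤ x i) → Freal A d ρ xρ uρ ≤ Freal A d ρ x u := by
    intro x u h1 h2 h3
    have h := hmin x u
    rw [GrhoC_eq A d ρ k xρ uρ ⟨hu1, hu2⟩ hx, GrhoC_eq A d ρ k x u ⟨h1, h2⟩ h3] at h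
    exact EReal.coe_le_coe_iff.mp h
  -- the top-k set T
  obtain ⟨T, -, hTc, hTt'⟩ := exists_top_finset xρ (min k N) Finset.univ
    (by simp [Finset.card_univ])
  have hTt : ∀ i ∈ T, ∀ l, l ∉ T → xρ l ≤ xρ i :=
    fun i hi l hl => hTt' i hi l (Finset.mem_univ l) hl
  set u' : Fin N → ℝ := fun i => if i ∈ T then 1 else 0 with hu'def
  have hu'1 : (∑ i, |u' i|) ≤ (k : ℝ) := by
    have e : (∑ i, |u' i|) = (T.card : ℝ) := by
      simp [hu'def, apply_ite abs, Finset.sum_ite_mem]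
    rw [e, hTc]
    exact_mod_cast min_le_left k N
  have hu'2 : ∀ i, -1 ≤ u' i ∧ u' i ≤ 1 := by
    intro i; rw [hu'def]; dsimp only; split <;> norm_num
  have hinner : ∑ i, xρ i * u' i = ∑ i ∈ T, xρ i := by
    simp [hu'def, mul_ite, Finset.sum_ite_mem]
  have habs : ∑ i, |xρ i| = ∑ i, xρ i :=
    Finset.sum_congr rfl fun i _ => abs_of_nonneg (hx i)
  have hle1 : ∑ i, xρ i * uρ i ≤ ∑ i ∈ T, xρ i :=
    sum_mul_le_sum_top xρ uρ T hk hx hu1 hu2 hTc hTt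
  have hle2 : ∑ i ∈ T, xρ i ≤ ∑ i, xρ i * uρ i := by
    have h := hR xρ u' hu'1 hu'2 hx
    simp only [Freal] at h
    rw [hinner] at h
    have h2 : ρ * ((∑ i, |xρ i|) - ∑ i, xρ i * uρ i)
        ≤ ρ * ((∑ i, |xρ i|) - ∑ i ∈ T, xρ i) := by linarith
    have h3 := le_of_mul_le_mul_left h2 hρ0
    linarith
  have heq : ∑ i, xρ i * uρ i = ∑ i ∈ T, xρ i := le_antisymm hle1 hle2
  set s : ℝ := ∑ i ∈ Tᶜ, xρ i with hsdef
  have hs0 : 0 ≤ s := Finset.sum_nonneg fun i _ => hx i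
  have hsplitx : ∑ i, xρ i = ∑ i ∈ T, xρ i + s := (Finset.sum_add_sum_compl T xρ).symm
  suffices hs : s = 0 by
    rw [habs, hsplitx, hs, add_zero]
    exact heq.symm
  set z : Fin N → ℝ := fun i => if i ∈ T then 0 else xρ i with hzdef
  have hz0 : ∀ i, 0 ≤ z i := by
    intro i; rw [hzdef]; dsimp only; split
    · exact le_refl 0
    · exact hx i
  set w := A.mulVec z with hwdef
  set B := ∑ i, (A.mulVec xρ - d) i * w i with hBdef
  set Q := ∑ i, w i ^ 2 with hQdef
  have hQ0 : 0 ≤ Q := Finset.sum_nonneg fun i _ => sq_nonneg _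
  have hzsum : ∑ i, z i = s := by
    rw [hzdef]
    dsimp only
    rw [Finset.sum_ite, Finset.sum_const_zero, zero_add, hsdef]
    congr 1
    ext i
    simp
  -- key inequality from perturbing x
  have hkey : ∀ t : ℝ, 0 ≤ t → t ≤ 1 → t * (ρ * s + B) ≤ t ^ 2 * Q / 2 := by
    intro t ht0 ht1
    set xt : Fin N → ℝ := fun i => xρ i - t * z i with hxtdef
    have hxt0 : ∀ i, 0 ≤ xt i := by
      intro i
      rw [hxtdef]; dsimp only
      rw [hzdef]; dsimp only
      split
      · simpa using hx i
      · nlinarith [hx i]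
    have h := hR xt u' hu'1 hu'2 hxt0
    have hmv : ∀ i, A.mulVec xt i = A.mulVec xρ i - t * w i := by
      intro i
      have e : xt = xρ - t • z := by funext j; simp [hxtdef]
      rw [e, Matrix.mulVec_sub, Matrix.mulVec_smul]
      simp [hwdef]
    have hquad : ∑ i, ((A.mulVec xt - d) i) ^ 2
        = ∑ i, ((A.mulVec xρ - d) i) ^ 2 - 2 * t * B + t ^ 2 * Q := by
      have e : ∀ i, ((A.mulVec xt - d) i) ^ 2
          = ((A.mulVec xρ - d) i) ^ 2 - 2 * t * ((A.mulVec xρ - d) i * w i)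
            + t ^ 2 * (w i ^ 2) := by
        intro i
        simp only [Pi.sub_apply, hmv]
        ring
      rw [Finset.sum_congr rfl fun i _ => e i, Finset.sum_add_distrib,
        Finset.sum_sub_distrib, ← Finset.mul_sum, ← Finset.mul_sum, hBdef, hQdef]
    have habst : ∑ i, |xt i| = ∑ i, xρ i - t * s := by
      rw [Finset.sum_congr rfl fun i _ => abs_of_nonneg (hxt0 i), hxtdef]
      rw [Finset.sum_sub_distrib, ← Finset.mul_sum, hzsum]
    have hinnt : ∑ i, xt i * u' i = ∑ i ∈ T, xρ i := by
      rw [hu'def]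
      dsimp only
      simp only [mul_ite, mul_one, mul_zero]
      rw [Finset.sum_ite_mem, Finset.univ_inter]
      refine Finset.sum_congr rfl fun i hi => ?_
      rw [hxtdef]; dsimp only
      rw [hzdef]; simp [hi]
    simp only [Freal] at h
    rw [hquad, habst, hinnt, heq, habs] at h
    linarith
  have hC : ρ * s + B ≤ 0 := by
    by_contra hc
    push_neg at hc
    have hQ1 : (0 : ℝ) < Q + 1 := by linarith
    set t0 : ℝ := min 1 ((ρ * s + B) / (Q + 1)) with ht0def
    have ht0pos : 0 < t0 := lt_min one_pos (div_pos hc hQ1)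
    have ht0le : t0 ≤ 1 := min_le_left _ _
    have ht0le2 : t0 * (Q + 1) ≤ ρ * s + B :=
      (le_div_iff₀ hQ1).mp (min_le_right _ _)
    have hk2 := hkey t0 ht0pos.le ht0le
    nlinarith [mul_pos ht0pos hc, sq_nonneg t0, mul_le_mul_of_nonneg_left ht0le2 ht0pos.le]
  have hb2 : ∑ i, ((A.mulVec xρ - d) i) ^ 2 ≤ ∑ i, d i ^ 2 := by
    have h := hR 0 uρ hu1 hu2 (fun i => le_refl 0)
    simp only [Freal, Matrix.mulVec_zero, Pi.zero_apply, zero_sub, zero_mul, abs_zero,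
      Finset.sum_const_zero, sub_zero, mul_zero, add_zero, neg_sq] at h
    have hpen : ∑ i, xρ i * uρ i ≤ ∑ i, |xρ i| := by
      rw [habs]
      refine Finset.sum_le_sum fun i _ => ?_
      nlinarith [hx i, (hu2 i).2]
    have hneg : ∑ i, ((-d) i) ^ 2 = ∑ i, d i ^ 2 := by
      refine Finset.sum_congr rfl fun i _ => ?_
      simp [neg_sq]
    rw [hneg] at h
    nlinarith [mul_nonneg hρ0.le (sub_nonneg.mpr hpen)]
  have hCS : -B ≤ Real.sqrt (∑ i, ((A.mulVec xρ - d) i) ^ 2) * Real.sqrt Q := by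
    have h1 : B ^ 2 ≤ (∑ i, ((A.mulVec xρ - d) i) ^ 2) * Q :=
      Finset.sum_mul_sq_le_sq_mul_sq _ _ _
    have h2 : |B| ≤ Real.sqrt ((∑ i, ((A.mulVec xρ - d) i) ^ 2) * Q) := by
      rw [← Real.sqrt_sq_eq_abs]
      exact Real.sqrt_le_sqrt h1
    rw [Real.sqrt_mul (Finset.sum_nonneg fun i _ => sq_nonneg _)] at h2
    linarith [neg_abs_le B]
  have hbd : Real.sqrt (∑ i, ((A.mulVec xρ - d) i) ^ 2) ≤ l2norm d := by
    rw [l2norm]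
    exact Real.sqrt_le_sqrt hb2
  have hz2 : Real.sqrt (∑ i, z i ^ 2) ≤ s := by
    have h1 : ∑ i, z i ^ 2 ≤ s ^ 2 := by
      have h := Finset.sum_sq_le_sq_sum_of_nonneg (f := z) (s := Finset.univ)
        (fun i _ => hz0 i)
      rwa [hzsum] at h
    calc Real.sqrt (∑ i, z i ^ 2) ≤ Real.sqrt (s ^ 2) := Real.sqrt_le_sqrt h1
    _ = s := Real.sqrt_sq hs0
  have hQs : Real.sqrt Q ≤ specNorm A * s := by
    calc Real.sqrt Q ≤ specNorm A * Real.sqrt (∑ i, z i ^ 2) := mulVec_l2_le A z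
    _ ≤ specNorm A * s := mul_le_mul_of_nonneg_left hz2 hσ
  have hfin : ρ * s ≤ (specNorm A * l2norm d) * s := by
    have c1 : ρ * s ≤ -B := by linarith
    have c2 : Real.sqrt (∑ i, ((A.mulVec xρ - d) i) ^ 2) * Real.sqrt Q
        ≤ l2norm d * (specNorm A * s) := by
      apply mul_le_mul hbd hQs (Real.sqrt_nonneg _) hd0
    calc ρ * s ≤ -B := c1
    _ ≤ Real.sqrt (∑ i, ((A.mulVec xρ - d) i) ^ 2) * Real.sqrt Q := hCS
    _ ≤ l2norm d * (specNorm A * s) := c2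
    _ = (specNorm A * l2norm d) * s := by ring
  nlinarith
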